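/- The dichotomies ({0,1,2,3,6,7}/{4,5,8,9,10,11}) and ({0,1,2,4,5,8}/{3,6,7,9,10,11}) of Z_12 are both strong, each with autocomplementarity T^{11}.11, i.e. x ↦ 11 − x mod 12. -/

import Mathlib

def Dich71 : Set (ZMod 12) := {0,1,2,3,6,7}
def Dich75 : Set (ZMod 12) := {0,1,2,4,5,8}


/-- The dichotomies ({0,1,2,3,6,7}/{4,5,8,9,10,11}) and
({0,1,2,4,5,8}/{3,6,7,9,10,11}) of ℤ₁₂ are both strong, each with
autocomplementarity T¹¹.11 : x ↦ 11 − x. -/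
theorem dich71_dich75_strong :
    (({4,5,8,9,10,11} : Set (ZMod 12)) = Dich71ᶜ) ∧
    (({3,6,7,9,10,11} : Set (ZMod 12)) = Dich75ᶜ) ∧
    IsUnit (11 : ZMod 12) ∧
    (∀ u t : ZMod 12, IsUnit u →
      (fun x => u * x + t) '' Dich71 = Dich71 → u = 1 ∧ t = 0) ∧
    (fun x : ZMod 12 => 11 * x + 11) '' Dich71 = Dich71ᶜ ∧
    (∀ u t : ZMod 12, IsUnit u →
      (fun x => u * x + t) '' Dich75 = Dich75 → u = 1 ∧ t = 0) ∧
    (fun x : ZMod 12 => 11 * x + 11) '' Dich75 = Dich75ᶜ := by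
  refine ⟨?_, ?_, IsUnit.of_mul_eq_one (a := 11) 11 (by decide), ?_, ?_, ?_, ?_⟩
  · ext x; simp [Dich71]; revert x; decide
  · ext x; simp [Dich75]; revert x; decide
  · intro u t hu h
    rw [isUnit_iff_exists] at hu
    rw [Set.ext_iff] at h
    simp only [Set.mem_image, Dich71, Set.mem_insert_iff, Set.mem_singleton_iff] at h
    revert hu h; revert u t; decide
  · ext x
    simp only [Set.mem_image, Dich71, Set.mem_insert_iff, Set.mem_singleton_iff,
      Set.mem_compl_iff]
    revert x; decide
  · intro u t hu h
    rw [isUnit_iff_exists] at hu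
    rw [Set.ext_iff] at h
    simp only [Set.mem_image, Dich75, Set.mem_insert_iff, Set.mem_singleton_iff] at h
    revert hu h; revert u t; decide
  · ext x
    simp only [Set.mem_image, Dich75, Set.mem_insert_iff, Set.mem_singleton_iff,
      Set.mem_compl_iff]
    revert x; decide
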